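/- For every vector v = (v₁, v₂) ∈ ℂ²: inf{‖g·v‖² : g ∈ SL₂(ℝ)} = 2·|Im(v₁·conj(v₂))|, where g ∈ SL₂(ℝ) acts ℂ-linearly on ℂ² as a complex matrix with real entries and ‖·‖ is the standard Hermitian norm on ℂ². Moreover, if Im(v₁·conj(v₂)) ≠ 0, then the infimum is attained: there exists g ∈ SL₂(ℝ) with ‖g·v‖² = 2·|Im(v₁·conj(v₂))|. -/

import Mathlib

private lemma sl2r_aux_shrink (v₁ v₂ : ℂ) (p q : ℝ) (z : ℂ) (hn : 0 < p^2 + q^2)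
    (h1 : v₁ = (p:ℂ) * z) (h2 : v₂ = (q:ℂ) * z) (ε : ℝ) (hε : 0 < ε) :
    ∃ g : Matrix (Fin 2) (Fin 2) ℝ, g.det = 1 ∧
      ‖(g 0 0 : ℂ) * v₁ + (g 0 1 : ℂ) * v₂‖ ^ 2
          + ‖(g 1 0 : ℂ) * v₁ + (g 1 1 : ℂ) * v₂‖ ^ 2 ≤ ε := by
  set C : ℝ := (p^2 + q^2) * ‖z‖ ^ 2 with hC
  have hC0 : 0 ≤ C := by positivity
  set s : ℝ := Real.sqrt (p^2 + q^2) with hsdef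
  have hs : 0 < s := Real.sqrt_pos.mpr hn
  have hs2 : s^2 = p^2 + q^2 := Real.sq_sqrt hn.le
  set t : ℝ := Real.sqrt (ε / (C + 1)) with htdef
  have ht : 0 < t := Real.sqrt_pos.mpr (by positivity)
  have ht2 : t^2 = ε / (C + 1) := Real.sq_sqrt (by positivity)
  refine ⟨!![t*p/s, t*q/s; -q/(t*s), p/(t*s)], ?_, ?_⟩
  · rw [Matrix.det_fin_two_of]
    field_simp
    nlinarith [hs2]
  · have e00 : (!![t*p/s, t*q/s; -q/(t*s), p/(t*s)] : Matrix (Fin 2) (Fin 2) ℝ) 0 0 = t*p/s := by simp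
    have e01 : (!![t*p/s, t*q/s; -q/(t*s), p/(t*s)] : Matrix (Fin 2) (Fin 2) ℝ) 0 1 = t*q/s := by simp
    have e10 : (!![t*p/s, t*q/s; -q/(t*s), p/(t*s)] : Matrix (Fin 2) (Fin 2) ℝ) 1 0 = -q/(t*s) := by simp
    have e11 : (!![t*p/s, t*q/s; -q/(t*s), p/(t*s)] : Matrix (Fin 2) (Fin 2) ℝ) 1 1 = p/(t*s) := by simp
    rw [e00, e01, e10, e11, h1, h2]
    have hw2 : ((-q/(t*s) : ℝ) : ℂ) * ((p:ℂ)*z) + ((p/(t*s) : ℝ) : ℂ) * ((q:ℂ)*z) = 0 := by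
      push_cast; ring
    have hw1 : ((t*p/s : ℝ) : ℂ) * ((p:ℂ)*z) + ((t*q/s : ℝ) : ℂ) * ((q:ℂ)*z)
        = ((t*(p^2+q^2)/s : ℝ) : ℂ) * z := by push_cast; ring
    rw [hw1, hw2, norm_zero, norm_mul, Complex.norm_real, Real.norm_eq_abs]
    have hval : (|t*(p^2+q^2)/s| * ‖z‖)^2 = ε * (C / (C+1)) := by
      have ht3 : t^2*(C+1) = ε := by rw [ht2]; field_simp
      rw [mul_pow, sq_abs]
      field_simp
      linear_combination ((p^2+q^2)^2 * ‖z‖^2) * ht3 - ε*C*hs2 - ε*(p^2+q^2)*hC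
    rw [hval]
    have h1 : C/(C+1) ≤ 1 := by
      rw [div_le_one (by positivity)]; linarith
    simpa using mul_le_of_le_one_right hε.le h1

private lemma sl2r_aux_attain (v₁ v₂ : ℂ) (hI : (v₁ * (starRingEnd ℂ) v₂).im ≠ 0) :
    ∃ g : Matrix (Fin 2) (Fin 2) ℝ, g.det = 1 ∧
      ‖(g 0 0 : ℂ) * v₁ + (g 0 1 : ℂ) * v₂‖ ^ 2
          + ‖(g 1 0 : ℂ) * v₁ + (g 1 1 : ℂ) * v₂‖ ^ 2
        = 2 * |(v₁ * (starRingEnd ℂ) v₂).im| := by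
  set I : ℝ := (v₁ * (starRingEnd ℂ) v₂).im with hIdef
  set x₁ := v₁.re; set y₁ := v₁.im; set x₂ := v₂.re; set y₂ := v₂.im
  set e : ℝ := x₁*y₂ - y₁*x₂ with he
  have hIe : I = -e := by
    rw [hIdef, Complex.mul_im, he]; simp; ring
  have he0 : e ≠ 0 := by intro h; exact hI (by rw [hIe, h, neg_zero])
  set s : ℝ := Real.sqrt |I| with hsdef
  have hs0 : 0 ≤ s := Real.sqrt_nonneg _
  have hs2 : s^2 = |I| := Real.sq_sqrt (abs_nonneg _)
  set σ : ℝ := if 0 < I then -1 else 1 with hσ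
  have hσ2 : σ^2 = 1 := by rw [hσ]; split_ifs <;> norm_num
  refine ⟨!![s*y₂/e, -(s*y₁)/e; -(σ*s*x₂)/e, σ*s*x₁/e], ?_, ?_⟩
  · rw [Matrix.det_fin_two_of]
    have hdet : s*y₂/e * (σ*s*x₁/e) - -(s*y₁)/e * (-(σ*s*x₂)/e) = σ*s^2/e := by
      field_simp; ring
    rw [hdet, hs2]
    rcases hI.lt_or_gt with h|h
    · rw [hσ]; rw [if_neg (by linarith)]
      rw [abs_of_neg h]
      rw [hIe] at *
      field_simp
    · rw [hσ]; rw [if_pos h]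
      rw [abs_of_pos h]
      rw [hIe] at *
      field_simp
  · have e00 : (!![s*y₂/e, -(s*y₁)/e; -(σ*s*x₂)/e, σ*s*x₁/e] : Matrix (Fin 2) (Fin 2) ℝ) 0 0 = s*y₂/e := by simp
    have e01 : (!![s*y₂/e, -(s*y₁)/e; -(σ*s*x₂)/e, σ*s*x₁/e] : Matrix (Fin 2) (Fin 2) ℝ) 0 1 = -(s*y₁)/e := by simp
    have e10 : (!![s*y₂/e, -(s*y₁)/e; -(σ*s*x₂)/e, σ*s*x₁/e] : Matrix (Fin 2) (Fin 2) ℝ) 1 0 = -(σ*s*x₂)/e := by simp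
    have e11 : (!![s*y₂/e, -(s*y₁)/e; -(σ*s*x₂)/e, σ*s*x₁/e] : Matrix (Fin 2) (Fin 2) ℝ) 1 1 = σ*s*x₁/e := by simp
    rw [e00, e01, e10, e11]
    have hw1 : ((s*y₂/e : ℝ) : ℂ) * v₁ + ((-(s*y₁)/e : ℝ) : ℂ) * v₂ = (s : ℂ) := by
      apply Complex.ext
      · simp [Complex.add_re, Complex.mul_re]
        field_simp
        linear_combination s * he
      · simp [Complex.add_im, Complex.mul_im]
        field_simp
        ring
    have hw2 : ((-(σ*s*x₂)/e : ℝ) : ℂ) * v₁ + ((σ*s*x₁/e : ℝ) : ℂ) * v₂ = ((σ*s : ℝ) : ℂ) * Complex.I := by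
      apply Complex.ext
      · simp [Complex.add_re, Complex.mul_re]
        field_simp
        ring
      · simp [Complex.add_im, Complex.mul_im]
        field_simp
        linear_combination σ * s * he
    rw [hw1, hw2, Complex.norm_real, Real.norm_eq_abs, norm_mul, Complex.norm_real, Real.norm_eq_abs, Complex.norm_I, mul_one,
      abs_of_nonneg hs0]
    rw [sq_abs, mul_pow, hσ2, one_mul, hs2]
    ring

/-- **Claim 4.31 (minimal vector length along an `SL₂(ℝ)`-orbit in `ℂ²`).**
For `v = (v₁, v₂) ∈ ℂ²`, `inf {‖g·v‖² : g ∈ SL₂(ℝ)} = 2·|Im(v₁·conj v₂)|`, and if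
`Im(v₁·conj v₂) ≠ 0` the infimum is attained. -/
theorem sl2r_orbit_min_norm (v₁ v₂ : ℂ) :
    sInf {r : ℝ | ∃ g : Matrix (Fin 2) (Fin 2) ℝ, g.det = 1 ∧
        r = ‖(g 0 0 : ℂ) * v₁ + (g 0 1 : ℂ) * v₂‖ ^ 2
            + ‖(g 1 0 : ℂ) * v₁ + (g 1 1 : ℂ) * v₂‖ ^ 2}
        = 2 * |(v₁ * (starRingEnd ℂ) v₂).im| ∧
    ((v₁ * (starRingEnd ℂ) v₂).im ≠ 0 →
      ∃ g : Matrix (Fin 2) (Fin 2) ℝ, g.det = 1 ∧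
        ‖(g 0 0 : ℂ) * v₁ + (g 0 1 : ℂ) * v₂‖ ^ 2
            + ‖(g 1 0 : ℂ) * v₁ + (g 1 1 : ℂ) * v₂‖ ^ 2
          = 2 * |(v₁ * (starRingEnd ℂ) v₂).im|) := by
  set I : ℝ := (v₁ * (starRingEnd ℂ) v₂).im with hIdef
  set S : Set ℝ := {r : ℝ | ∃ g : Matrix (Fin 2) (Fin 2) ℝ, g.det = 1 ∧
        r = ‖(g 0 0 : ℂ) * v₁ + (g 0 1 : ℂ) * v₂‖ ^ 2
            + ‖(g 1 0 : ℂ) * v₁ + (g 1 1 : ℂ) * v₂‖ ^ 2} with hS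
  -- the invariant `Im(w₁ conj w₂) = det g · Im(v₁ conj v₂)`
  have key_im : ∀ a b c d : ℝ,
      (((a:ℂ)*v₁ + b*v₂) * (starRingEnd ℂ) ((c:ℂ)*v₁ + d*v₂)).im = (a*d - b*c) * I := by
    intro a b c d
    simp [hIdef, Complex.add_im, Complex.add_re, Complex.mul_im, Complex.mul_re]
    ring
  -- lower bound
  have hlb : ∀ r ∈ S, 2 * |I| ≤ r := by
    rintro r ⟨g, hg, rfl⟩
    rw [Matrix.det_fin_two] at hg
    set w₁ : ℂ := (g 0 0 : ℂ) * v₁ + (g 0 1 : ℂ) * v₂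
    set w₂ : ℂ := (g 1 0 : ℂ) * v₁ + (g 1 1 : ℂ) * v₂
    have h1 : (w₁ * (starRingEnd ℂ) w₂).im = I := by
      rw [key_im, hg, one_mul]
    have h2 : |I| ≤ ‖w₁‖ * ‖w₂‖ := by
      rw [← h1]
      calc |(w₁ * (starRingEnd ℂ) w₂).im| ≤ ‖w₁ * (starRingEnd ℂ) w₂‖ :=
            Complex.abs_im_le_norm _
        _ = ‖w₁‖ * ‖w₂‖ := by
            rw [norm_mul, Complex.norm_conj]
    nlinarith [sq_nonneg (‖w₁‖ - ‖w₂‖)]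
  have hbdd : BddBelow S := ⟨2 * |I|, hlb⟩
  have hne : S.Nonempty :=
    ⟨_, (1 : Matrix (Fin 2) (Fin 2) ℝ), Matrix.det_one, rfl⟩
  constructor
  · refine le_antisymm ?_ (le_csInf hne hlb)
    by_cases hI : I = 0
    · rw [hI, abs_zero, mul_zero]
      -- decompose `v` as a complex multiple of a real vector
      obtain ⟨p, q, z, hn, h1, h2⟩ :
          ∃ (p q : ℝ) (z : ℂ), 0 < p^2 + q^2 ∧ v₁ = (p:ℂ) * z ∧ v₂ = (q:ℂ) * z := by
        by_cases h2 : v₂ = 0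
        · exact ⟨1, 0, v₁, by norm_num, by simp, by simp [h2]⟩
        · refine ⟨(v₁ * (starRingEnd ℂ) v₂).re / Complex.normSq v₂, 1, v₂,
            by positivity, ?_, by simp⟩
          have hns : (Complex.normSq v₂ : ℂ) ≠ 0 := by
            exact_mod_cast (Complex.normSq_pos.mpr h2).ne'
          have him : (v₁ * (starRingEnd ℂ) v₂).im = 0 := by rw [← hIdef]; exact hI
          have hre : v₁ * (starRingEnd ℂ) v₂ = ((v₁ * (starRingEnd ℂ) v₂).re : ℂ) :=
            Complex.ext (by simp) (by simp [him])
          have key : v₁ * (Complex.normSq v₂ : ℂ)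
              = ((v₁ * (starRingEnd ℂ) v₂).re : ℂ) * v₂ := by
            rw [Complex.normSq_eq_conj_mul_self, ← mul_assoc, hre]; simp
          rw [Complex.ofReal_div, div_mul_eq_mul_div, eq_div_iff hns]
          linear_combination key
      refine le_of_forall_pos_le_add ?_
      intro ε hε
      obtain ⟨g, hdet, hle⟩ := sl2r_aux_shrink v₁ v₂ p q z hn h1 h2 ε hε
      have hmem : (‖(g 0 0 : ℂ) * v₁ + (g 0 1 : ℂ) * v₂‖ ^ 2
          + ‖(g 1 0 : ℂ) * v₁ + (g 1 1 : ℂ) * v₂‖ ^ 2) ∈ S := ⟨g, hdet, rfl⟩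
      have := csInf_le hbdd hmem
      linarith
    · obtain ⟨g, hdet, heq⟩ := sl2r_aux_attain v₁ v₂ (by rw [← hIdef]; exact hI)
      have hmem : (2 * |I|) ∈ S := ⟨g, hdet, by rw [← hIdef] at heq; exact heq.symm⟩
      exact csInf_le hbdd hmem
  · intro hI
    exact sl2r_aux_attain v₁ v₂ hI
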